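/- Let m be a positive integer and J, K ⊆ {0,1,…,m−1} with |J| = |K|, and suppose H_{J,K,m} is a Hadamard submatrix of the Fourier matrix F_m. If J′ ⊆ {0,1,…,m−1} with |J′| = |K| and P_m(J′) = P_m(J), then H_{J′,K,m} is also a Hadamard submatrix of F_m. Likewise, if K′ ⊆ {0,1,…,m−1} with |K′| = |J| and P_m(K′) = P_m(K), then H_{J,K′,m} is also a Hadamard submatrix of F_m. -/

import Mathlib

open Finset

/-- The difference set `D(X) = {x₁ - x₂ : x₁, x₂ ∈ X}` of a finite set of naturals. -/
def diffSet (X : Finset ℕ) : Finset ℤ :=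
  (X ×ˢ X).image fun q => (q.1 : ℤ) - (q.2 : ℤ)

/-- The `m`-th primitive set `P_m(X) = {m / gcd(m,d) : d ∈ D(X)}`. -/
def primSet (m : ℕ) (X : Finset ℕ) : Finset ℕ :=
  (diffSet X).image fun d => m / Nat.gcd m d.natAbs

/-- `H_{J,K,m}` is a Hadamard submatrix of the Fourier matrix `F_m`:
for all distinct `j₁ j₂ ∈ J`, `∑_{k ∈ K} e^{2πi(j₁-j₂)k/m} = 0`. -/
def IsHadamardSub (m : ℕ) (J K : Finset ℕ) : Prop :=
  ∀ j₁ ∈ J, ∀ j₂ ∈ J, j₁ ≠ j₂ →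
    ∑ k ∈ K, Complex.exp (2 * Real.pi * Complex.I * ((j₁ : ℂ) - (j₂ : ℂ)) * (k : ℂ) / (m : ℂ)) = 0

/-- `ν_p^max` of a finite set of naturals. -/
noncomputable def nuMaxN (p : ℕ) (S : Finset ℕ) : ℕ := S.sup fun n => padicValNat p n

/-- `ν_p^min` of a finite set of naturals (0 for the empty set). -/
noncomputable def nuMinN (p : ℕ) (S : Finset ℕ) : ℕ :=
  if h : S.Nonempty then S.inf' h fun n => padicValNat p n else 0

/-- `ν_p^max` of a finite set of integers. -/
noncomputable def nuMaxI (p : ℕ) (S : Finset ℤ) : ℕ := S.sup fun d => padicValInt p d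

/-- `ν_p^min` of a finite set of integers (0 for the empty set). -/
noncomputable def nuMinI (p : ℕ) (S : Finset ℤ) : ℕ :=
  if h : S.Nonempty then S.inf' h fun d => padicValInt p d else 0

/-- `C_m(X) = ∏_{s ∈ P_m(X) \ {1}} Φ_s(1)`. -/
noncomputable def Cm (m : ℕ) (X : Finset ℕ) : ℤ :=
  ∏ s ∈ (primSet m X).erase 1, (Polynomial.cyclotomic s ℤ).eval 1

noncomputable def zetaC (m : ℕ) : ℂ := Complex.exp (2 * Real.pi * Complex.I / m)

lemma zetaC_prim (m : ℕ) (hm : 0 < m) : IsPrimitiveRoot (zetaC m) m :=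
  Complex.isPrimitiveRoot_exp m hm.ne'

lemma prim_pow (m : ℕ) (hm : 0 < m) (a : ℕ) :
    IsPrimitiveRoot ((zetaC m) ^ a) (m / Nat.gcd m a) := by
  rcases Nat.eq_zero_or_pos a with rfl | ha
  · simpa [Nat.gcd_zero_right, Nat.div_self hm] using IsPrimitiveRoot.one (M := ℂ)
  · set g := Nat.gcd m a with hg
    have hg0 : 0 < g := Nat.gcd_pos_of_pos_left _ hm
    have h1 : IsPrimitiveRoot ((zetaC m) ^ g) (m / g) :=
      (zetaC_prim m hm).pow hm (Nat.mul_div_cancel' (Nat.gcd_dvd_left m a)).symm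
    have h2 := h1.pow_of_coprime (a / g) ((Nat.coprime_div_gcd_div_gcd hg0).symm)
    rw [← pow_mul] at h2
    rwa [Nat.mul_div_cancel' (Nat.gcd_dvd_right m a)] at h2

lemma prim_zpow (m : ℕ) (hm : 0 < m) (d : ℤ) :
    IsPrimitiveRoot ((zetaC m) ^ d) (m / Nat.gcd m d.natAbs) := by
  rcases d.natAbs_eq with h | h
  · rw [h, zpow_natCast]; exact prim_pow m hm d.natAbs
  · rw [h, zpow_neg, zpow_natCast, Int.natAbs_neg, Int.natAbs_natCast]
    exact (prim_pow m hm d.natAbs).inv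

lemma sum_transfer (m : ℕ) (hm : 0 < m) (K : Finset ℕ) (d e : ℤ)
    (hs : m / Nat.gcd m e.natAbs = m / Nat.gcd m d.natAbs)
    (h0 : ∑ k ∈ K, Complex.exp (2 * Real.pi * Complex.I * (e : ℂ) * (k : ℂ) / (m : ℂ)) = 0) :
    ∑ k ∈ K, Complex.exp (2 * Real.pi * Complex.I * (d : ℂ) * (k : ℂ) / (m : ℂ)) = 0 := by
  set s := m / Nat.gcd m d.natAbs with hsdef
  have hs1 : 0 < s :=
    Nat.div_pos (Nat.le_of_dvd hm (Nat.gcd_dvd_left _ _)) (Nat.gcd_pos_of_pos_left _ hm)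
  have hsum : ∀ a : ℤ, ∑ k ∈ K, Complex.exp (2 * Real.pi * Complex.I * (a : ℂ) * (k : ℂ) / (m : ℂ))
      = ∑ k ∈ K, ((zetaC m) ^ a) ^ (k : ℕ) := by
    intro a
    refine Finset.sum_congr rfl fun k _ => ?_
    have h1 : (2 * Real.pi * Complex.I * (a : ℂ) * (k : ℂ) / (m : ℂ))
        = ((a * (k : ℤ) : ℤ) : ℂ) * (2 * Real.pi * Complex.I / m) := by
      push_cast; ring
    rw [h1, Complex.exp_int_mul, ← zetaC, zpow_mul, zpow_natCast]
  set f : Polynomial ℚ := ∑ k ∈ K, Polynomial.X ^ k with hf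
  have heval : ∀ η : ℂ, Polynomial.aeval η f = ∑ k ∈ K, η ^ (k : ℕ) := by
    intro η; simp [hf]
  have hηe : IsPrimitiveRoot ((zetaC m) ^ e) s := hs ▸ prim_zpow m hm e
  have hηd : IsPrimitiveRoot ((zetaC m) ^ d) s := prim_zpow m hm d
  have hroot : Polynomial.aeval ((zetaC m) ^ e) f = 0 := by
    rw [heval, ← hsum]; exact h0
  have hdvd : Polynomial.cyclotomic s ℚ ∣ f := by
    rw [Polynomial.cyclotomic_eq_minpoly_rat hηe hs1]
    exact minpoly.dvd ℚ _ hroot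
  obtain ⟨g, hg⟩ := hdvd
  have hcyc : Polynomial.aeval ((zetaC m) ^ d) (Polynomial.cyclotomic s ℚ) = 0 := by
    have h2 := hηd.isRoot_cyclotomic hs1
    rw [Polynomial.aeval_def, ← Polynomial.eval_map, Polynomial.map_cyclotomic]
    exact h2
  rw [hsum, ← heval, hg, map_mul, hcyc, zero_mul]

lemma row_replace (m : ℕ) (hm : 0 < m) (J K J' : Finset ℕ)
    (hJ' : J' ⊆ Finset.range m) (hprim : primSet m J' = primSet m J)
    (hH : IsHadamardSub m J K) : IsHadamardSub m J' K := by
  intro j₁ h₁ j₂ h₂ hne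
  set d : ℤ := (j₁ : ℤ) - (j₂ : ℤ) with hd
  have hdmem : d ∈ diffSet J' :=
    Finset.mem_image.mpr ⟨(j₁, j₂), Finset.mem_product.mpr ⟨h₁, h₂⟩, rfl⟩
  set s := m / Nat.gcd m d.natAbs with hsdef
  have hsmem : s ∈ primSet m J := by
    rw [← hprim]; exact Finset.mem_image.mpr ⟨d, hdmem, rfl⟩
  have hj₁ := Finset.mem_range.mp (hJ' h₁)
  have hj₂ := Finset.mem_range.mp (hJ' h₂)
  have hdne : d ≠ 0 := by
    simp only [hd, sub_ne_zero]; exact_mod_cast hne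
  have hdabs : d.natAbs < m := by omega
  have hdabs0 : 0 < d.natAbs := Int.natAbs_pos.mpr hdne
  have hs1 : s ≠ 1 := by
    intro h1
    have hmul : s * Nat.gcd m d.natAbs = m := Nat.div_mul_cancel (Nat.gcd_dvd_left _ _)
    have hgle : Nat.gcd m d.natAbs ≤ d.natAbs := Nat.le_of_dvd hdabs0 (Nat.gcd_dvd_right _ _)
    rw [h1, one_mul] at hmul
    omega
  obtain ⟨e, hemem, hse⟩ := Finset.mem_image.mp hsmem
  have hene : e ≠ 0 := by
    rintro rfl
    simp only [Int.natAbs_zero, Nat.gcd_zero_right, Nat.div_self hm] at hse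
    exact hs1 hse.symm
  obtain ⟨⟨a, b⟩, habmem, rfl⟩ := Finset.mem_image.mp hemem
  obtain ⟨haJ, hbJ⟩ := Finset.mem_product.mp habmem
  have habne : a ≠ b := by
    rintro rfl; exact hene (by ring)
  have h0 := hH a haJ b hbJ habne
  have hcast : ∀ x y : ℕ, ((x : ℂ) - (y : ℂ)) = (((x : ℤ) - (y : ℤ) : ℤ) : ℂ) := by
    intro x y; push_cast; ring
  simp only [hcast] at h0 ⊢
  exact sum_transfer m hm K d _ hse h0


lemma hadamard_transpose (m : ℕ) (J K : Finset ℕ) (hcard : J.card = K.card)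
    (hH : IsHadamardSub m J K) : IsHadamardSub m K J := by
  classical
  intro k₁ hk₁ k₂ hk₂ hkne
  set E : ℕ → ℕ → ℂ :=
    fun j k => Complex.exp (2 * Real.pi * Complex.I * (j : ℂ) * (k : ℂ) / (m : ℂ)) with hE
  have Emul : ∀ j j' k : ℕ, E j k * (starRingEnd ℂ) (E j' k)
      = Complex.exp (2 * Real.pi * Complex.I * ((j : ℂ) - (j' : ℂ)) * (k : ℂ) / (m : ℂ)) := by
    intro j j' k
    simp only [hE]
    rw [← Complex.exp_conj, ← Complex.exp_add]
    congr 1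
    have hc : (starRingEnd ℂ) (2 * Real.pi * Complex.I * (j' : ℂ) * (k : ℂ) / (m : ℂ))
        = -(2 * Real.pi * Complex.I * (j' : ℂ) * (k : ℂ)) / (m : ℂ) := by
      simp only [map_div₀, map_mul, map_ofNat, Complex.conj_I, Complex.conj_natCast,
        Complex.conj_ofReal]
      ring
    rw [hc, ← add_div]
    congr 1
    ring
  have hcardT : Fintype.card {x // x ∈ J} = Fintype.card {x // x ∈ K} := by
    simp [hcard]
  let e : {x // x ∈ J} ≃ {x // x ∈ K} := Fintype.equivOfCardEq hcardT
  let N : Matrix {x // x ∈ J} {x // x ∈ J} ℂ := fun j j' => E (j : ℕ) ((e j' : ℕ))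
  have hKpos : 0 < K.card := Finset.card_pos.mpr ⟨k₁, hk₁⟩
  have hcne : (K.card : ℂ) ≠ 0 := Nat.cast_ne_zero.mpr hKpos.ne'
  have hmul : N * N.conjTranspose = (K.card : ℂ) • 1 := by
    ext j j'
    have h1 : (N * N.conjTranspose) j j'
        = ∑ x : {x // x ∈ J}, E (j : ℕ) ((e x : ℕ)) * (starRingEnd ℂ) (E (j' : ℕ) ((e x : ℕ))) := by
      simp only [Matrix.mul_apply, Matrix.conjTranspose_apply]; simp [N, Complex.star_def]
    have h2 : (∑ x : {x // x ∈ J}, E (j : ℕ) ((e x : ℕ)) * (starRingEnd ℂ) (E (j' : ℕ) ((e x : ℕ))))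
        = ∑ k : {x // x ∈ K}, E (j : ℕ) (k : ℕ) * (starRingEnd ℂ) (E (j' : ℕ) (k : ℕ)) :=
      Equiv.sum_comp e fun k => E (j : ℕ) (k : ℕ) * (starRingEnd ℂ) (E (j' : ℕ) (k : ℕ))
    have h3 : (∑ k : {x // x ∈ K}, E (j : ℕ) (k : ℕ) * (starRingEnd ℂ) (E (j' : ℕ) (k : ℕ)))
        = ∑ k ∈ K, E (j : ℕ) k * (starRingEnd ℂ) (E (j' : ℕ) k) :=
      Finset.sum_coe_sort K (fun k => E (j : ℕ) k * (starRingEnd ℂ) (E (j' : ℕ) k))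
    rw [h1, h2, h3]
    by_cases hjj : j = j'
    · subst hjj
      have : ∀ k ∈ K, E (j : ℕ) k * (starRingEnd ℂ) (E (j : ℕ) k) = 1 := by
        intro k _
        rw [Emul]
        simp
      rw [Finset.sum_congr rfl this, Finset.sum_const, Matrix.smul_apply,
        Matrix.one_apply_eq]
      simp
    · have hne : (j : ℕ) ≠ (j' : ℕ) := fun h => hjj (Subtype.ext h)
      rw [Finset.sum_congr rfl fun k _ => Emul (j : ℕ) (j' : ℕ) k,
        hH _ j.2 _ j'.2 hne, Matrix.smul_apply, Matrix.one_apply_ne hjj]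
      simp
  have hinv : N * ((K.card : ℂ)⁻¹ • N.conjTranspose) = 1 := by
    rw [Matrix.mul_smul, hmul, smul_smul, inv_mul_cancel₀ hcne, one_smul]
  have hinv2 := mul_eq_one_comm.mp hinv
  have hmul2 : N.conjTranspose * N = (K.card : ℂ) • 1 := by
    calc N.conjTranspose * N
        = (K.card : ℂ) • (((K.card : ℂ)⁻¹ • N.conjTranspose) * N) := by
          rw [Matrix.smul_mul, smul_smul, mul_inv_cancel₀ hcne, one_smul]
      _ = (K.card : ℂ) • 1 := by rw [hinv2]
  set a : {x // x ∈ J} := e.symm ⟨k₂, hk₂⟩ with ha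
  set b : {x // x ∈ J} := e.symm ⟨k₁, hk₁⟩ with hb
  have hab : a ≠ b := by
    intro h
    apply hkne
    have h2 := e.symm.injective (ha ▸ hb ▸ h)
    exact (Subtype.ext_iff.mp h2).symm
  have hentry : (N.conjTranspose * N) a b = 0 := by
    rw [hmul2, Matrix.smul_apply, Matrix.one_apply_ne hab]
    simp
  have hexp : (N.conjTranspose * N) a b
      = ∑ j ∈ J, Complex.exp (2 * Real.pi * Complex.I * ((k₁ : ℂ) - (k₂ : ℂ)) * (j : ℂ) / (m : ℂ)) := by
    have h1 : (N.conjTranspose * N) a b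
        = ∑ x : {x // x ∈ J}, E (k₁ : ℕ) (x : ℕ) * (starRingEnd ℂ) (E (k₂ : ℕ) (x : ℕ)) := by
      simp only [Matrix.mul_apply, Matrix.conjTranspose_apply]; simp only [N, Complex.star_def]
      refine Finset.sum_congr rfl fun x _ => ?_
      rw [ha, hb]
      simp only [Equiv.apply_symm_apply]
      have hsymm : ∀ u v : ℕ, E u v = E v u := by
        intro u v; simp only [hE]; ring_nf
      rw [hsymm (x : ℕ) k₂, hsymm (x : ℕ) k₁, mul_comm]
    rw [h1, Finset.sum_coe_sort J (fun j => E k₁ j * (starRingEnd ℂ) (E k₂ j))]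
    exact Finset.sum_congr rfl fun j _ => Emul _ _ _
  rw [← hexp, hentry]

theorem hadamard_of_primSet_eq (m : ℕ) (hm : 0 < m) (J K : Finset ℕ)
    (hJ : J ⊆ Finset.range m) (hK : K ⊆ Finset.range m) (hcard : J.card = K.card)
    (hH : IsHadamardSub m J K) :
    (∀ J' : Finset ℕ, J' ⊆ Finset.range m → J'.card = K.card →
      primSet m J' = primSet m J → IsHadamardSub m J' K) ∧
    (∀ K' : Finset ℕ, K' ⊆ Finset.range m → K'.card = J.card →
      primSet m K' = primSet m K → IsHadamardSub m J K') := by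
  constructor
  · intro J' hJ'r _ hprim
    exact row_replace m hm J K J' hJ'r hprim hH
  · intro K' hK'r hK'card hprim
    have h1 : IsHadamardSub m K J := hadamard_transpose m J K hcard hH
    have h2 : IsHadamardSub m K' J := row_replace m hm K J K' hK'r hprim h1
    exact hadamard_transpose m K' J hK'card h2
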